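/- If $z \in \mathbb{C}^4$ satisfies $|z_i| = r$ for all $i = 1,2,3,4$ and has phase difference $\phi$, then $\|z\|_{\mathsf{X}} = 2\sqrt{2}\, r \sqrt{1 + |\cos(\phi/2)|}$. -/

import Mathlib

open Complex Real

noncomputable def Xfun (z : Fin 4 → ℂ) (σ : ℝ) : ℝ :=
  ‖z 0 * Complex.exp (σ * Complex.I) + (starRingEnd ℂ) (z 3)‖ +
  ‖z 1 * Complex.exp (σ * Complex.I) + (starRingEnd ℂ) (z 2)‖

noncomputable def Xnorm (z : Fin 4 → ℂ) : ℝ := ⨆ σ : ℝ, Xfun z σ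

noncomputable def phase (z : Fin 4 → ℂ) : ℝ :=
  (Complex.arg (z 0) + Complex.arg (z 3)) - (Complex.arg (z 1) + Complex.arg (z 2))


lemma aux_exp_abs (t : ℝ) :
    ‖Complex.exp (t * Complex.I) + 1‖ = 2 * |Real.cos (t/2)| := by
  have h : Complex.exp ((t:ℂ) * Complex.I) + 1
      = Complex.exp (((t/2 : ℝ):ℂ) * Complex.I) * ((2 * Real.cos (t/2) : ℝ) : ℂ) := by
    have h1 : (t:ℂ) * Complex.I = ((t/2:ℝ):ℂ) * Complex.I + ((t/2:ℝ):ℂ) * Complex.I := by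
      push_cast; ring
    rw [h1, Complex.exp_add, Complex.exp_mul_I]
    push_cast
    linear_combination Complex.sin ((t:ℂ)/2)^2 * Complex.I_sq - Complex.sin_sq_add_cos_sq ((t:ℂ)/2)
  rw [h, norm_mul, Complex.norm_exp_ofReal_mul_I, one_mul, Complex.norm_real, Real.norm_eq_abs, abs_mul]
  simp
lemma aux_term (r a b σ : ℝ) (hr : 0 ≤ r) :
    ‖(r:ℂ) * Complex.exp (a * Complex.I) * Complex.exp (σ * Complex.I)
      + (starRingEnd ℂ) ((r:ℂ) * Complex.exp (b * Complex.I))‖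
    = 2 * r * |Real.cos ((σ + a + b)/2)| := by
  have hc : (starRingEnd ℂ) ((r:ℂ) * Complex.exp (b * Complex.I))
      = (r:ℂ) * Complex.exp ((-b : ℝ) * Complex.I) := by
    rw [map_mul, Complex.conj_ofReal, ← Complex.exp_conj]
    congr 1
    simp [Complex.conj_I]
  have E1 : Complex.exp ((a:ℂ) * Complex.I) * Complex.exp ((σ:ℂ) * Complex.I)
      = Complex.exp (((a + σ : ℝ):ℂ) * Complex.I) := by
    rw [← Complex.exp_add]; congr 1; push_cast; ring
  have E2 : Complex.exp (((-b : ℝ):ℂ) * Complex.I) * Complex.exp (((σ + a + b : ℝ):ℂ) * Complex.I)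
      = Complex.exp (((a + σ : ℝ):ℂ) * Complex.I) := by
    rw [← Complex.exp_add]; congr 1; push_cast; ring
  have key : (r:ℂ) * Complex.exp (a * Complex.I) * Complex.exp (σ * Complex.I)
      + (starRingEnd ℂ) ((r:ℂ) * Complex.exp (b * Complex.I))
      = Complex.exp (((-b : ℝ):ℂ) * Complex.I) *
        ((r:ℂ) * (Complex.exp (((σ + a + b : ℝ):ℂ) * Complex.I) + 1)) := by
    rw [hc]
    linear_combination (r:ℂ) * E1 - (r:ℂ) * E2
  rw [key, norm_mul, Complex.norm_exp_ofReal_mul_I, one_mul, norm_mul, Complex.norm_real, Real.norm_eq_abs,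
    _root_.abs_of_nonneg hr, aux_exp_abs]
  ring
lemma aux_sq (u v : ℝ) : (|Real.cos u| + |Real.cos v|)^2
    = 1 + Real.cos (u+v) * Real.cos (u-v) + |Real.cos (u-v) + Real.cos (u+v)| := by
  have h1 : Real.cos (u-v) + Real.cos (u+v) = 2 * (Real.cos u * Real.cos v) := by
    rw [Real.cos_add, Real.cos_sub]; ring
  have h2 : Real.cos (u+v) * Real.cos (u-v) = Real.cos u^2 + Real.cos v^2 - 1 := by
    rw [Real.cos_add, Real.cos_sub]
    nlinarith [Real.sin_sq_add_cos_sq u, Real.sin_sq_add_cos_sq v]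
  rw [h1, h2, abs_mul, abs_mul, (by norm_num : |(2:ℝ)| = 2)]
  nlinarith [_root_.sq_abs (Real.cos u), _root_.sq_abs (Real.cos v), _root_.abs_mul (Real.cos u) (Real.cos v),
    abs_nonneg (Real.cos u), abs_nonneg (Real.cos v)]

lemma aux_le (u v : ℝ) :
    |Real.cos u| + |Real.cos v| ≤ Real.sqrt (2 + 2*|Real.cos (u-v)|) := by
  have hnn : 0 ≤ |Real.cos u| + |Real.cos v| := by positivity
  have hsq : (|Real.cos u| + |Real.cos v|)^2 ≤ 2 + 2*|Real.cos (u-v)| := by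
    rw [aux_sq]
    have h1 := abs_add_le (Real.cos (u-v)) (Real.cos (u+v))
    have h2 := Real.abs_cos_le_one (u+v)
    have h3 := abs_le.mp h2
    have h4 := le_abs_self (Real.cos (u-v))
    have h5 := neg_abs_le (Real.cos (u-v))
    nlinarith [mul_nonneg (sub_nonneg.mpr h3.2) (sub_nonneg.mpr h5 : (0:ℝ) ≤ Real.cos (u-v) - -|Real.cos (u-v)|),
      mul_nonneg (sub_nonneg.mpr (neg_le.mp h3.1)) (sub_nonneg.mpr h4)]
  calc |Real.cos u| + |Real.cos v| = Real.sqrt ((|Real.cos u| + |Real.cos v|)^2) :=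
        (Real.sqrt_sq hnn).symm
    _ ≤ _ := Real.sqrt_le_sqrt hsq

lemma aux_attain (u v : ℝ)
    (h : (0 ≤ Real.cos (u-v) ∧ Real.cos (u+v) = 1) ∨
         (Real.cos (u-v) < 0 ∧ Real.cos (u+v) = -1)) :
    |Real.cos u| + |Real.cos v| = Real.sqrt (2 + 2*|Real.cos (u-v)|) := by
  have hnn : 0 ≤ |Real.cos u| + |Real.cos v| := by positivity
  have hsq : (|Real.cos u| + |Real.cos v|)^2 = 2 + 2*|Real.cos (u-v)| := by
    rw [aux_sq]
    rcases h with ⟨hc, hs⟩ | ⟨hc, hs⟩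
    · rw [hs, _root_.abs_of_nonneg hc,
        _root_.abs_of_nonneg (by linarith : (0:ℝ) ≤ Real.cos (u-v) + 1)]
      ring
    · rw [hs, _root_.abs_of_neg hc,
        _root_.abs_of_nonpos (by linarith : Real.cos (u-v) + -1 ≤ 0)]
      ring
  rw [← hsq, Real.sqrt_sq hnn]

theorem stmt_10 (z : Fin 4 → ℂ) (r : ℝ) (hr : 0 ≤ r) (θ : Fin 4 → ℝ)
    (hz : ∀ i, z i = (r : ℂ) * Complex.exp (θ i * Complex.I)) (φ : ℝ)
    (hφ : φ = (θ 0 + θ 3) - (θ 1 + θ 2)) :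
    Xnorm z = 2 * Real.sqrt 2 * r * Real.sqrt (1 + |Real.cos (φ / 2)|) := by
  set A := θ 0 + θ 3 with hA
  set B := θ 1 + θ 2 with hB
  have hX : ∀ σ : ℝ, Xfun z σ
      = 2*r*(|Real.cos ((σ+A)/2)| + |Real.cos ((σ+B)/2)|) := by
    intro σ
    unfold Xfun
    rw [hz 0, hz 3, hz 1, hz 2, aux_term r (θ 0) (θ 3) σ hr, aux_term r (θ 1) (θ 2) σ hr]
    have e1 : (σ + θ 0 + θ 3)/2 = (σ + A)/2 := by rw [hA]; ring
    have e2 : (σ + θ 1 + θ 2)/2 = (σ + B)/2 := by rw [hB]; ring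
    rw [e1, e2]; ring
  have hdiff : ∀ σ : ℝ, (σ+A)/2 - (σ+B)/2 = φ/2 := by
    intro σ; rw [hφ]; ring
  have hRHS : 2 * Real.sqrt 2 * r * Real.sqrt (1 + |Real.cos (φ / 2)|)
      = 2*r*Real.sqrt (2 + 2*|Real.cos (φ/2)|) := by
    rw [show (2:ℝ) + 2*|Real.cos (φ/2)| = 2 * (1 + |Real.cos (φ/2)|) by ring,
      Real.sqrt_mul (by norm_num : (0:ℝ) ≤ 2)]
    ring
  set M := 2*r*Real.sqrt (2 + 2*|Real.cos (φ/2)|) with hM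
  have hub : ∀ σ : ℝ, Xfun z σ ≤ M := by
    intro σ
    rw [hX σ, hM]
    have := aux_le ((σ+A)/2) ((σ+B)/2)
    rw [hdiff σ] at this
    exact mul_le_mul_of_nonneg_left this (by positivity)
  -- witness
  have hwit : ∃ σ₀ : ℝ, Xfun z σ₀ = M := by
    rcases le_or_gt 0 (Real.cos (φ/2)) with hc | hc
    · refine ⟨-((A+B)/2), ?_⟩
      rw [hX, hM]
      have hsum : (-((A+B)/2)+A)/2 + (-((A+B)/2)+B)/2 = 0 := by ring
      have h := aux_attain ((-((A+B)/2)+A)/2) ((-((A+B)/2)+B)/2)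
        (Or.inl ⟨by rw [hdiff]; exact hc, by rw [hsum, Real.cos_zero]⟩)
      rw [hdiff] at h
      rw [h]
    · refine ⟨Real.pi - (A+B)/2, ?_⟩
      rw [hX, hM]
      have hsum : ((Real.pi - (A+B)/2)+A)/2 + ((Real.pi - (A+B)/2)+B)/2 = Real.pi := by ring
      have h := aux_attain (((Real.pi - (A+B)/2)+A)/2) (((Real.pi - (A+B)/2)+B)/2)
        (Or.inr ⟨by rw [hdiff]; exact hc, by rw [hsum, Real.cos_pi]⟩)
      rw [hdiff] at h
      rw [h]
  obtain ⟨σ₀, hσ₀⟩ := hwit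
  rw [hRHS]
  unfold Xnorm
  apply le_antisymm
  · exact ciSup_le hub
  · rw [← hσ₀]
    exact le_ciSup ⟨M, by rintro x ⟨σ, rfl⟩; exact hub σ⟩ σ₀
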